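/- Let C, b > 0, p ≥ 1, and let {s_n}_{n≥1} be a positive sequence. If s_n ≤ C (m!)^p / (b^m n^m) for all m ∈ ℕ₀ and all n ≥ 1, then s_n ≤ C · 2^p · exp(−(p/2)(bn)^{1/p}) for all n ≥ 1. -/

import Mathlib

/-- Summation lemma: if `s n ≤ C (m!)^p / (b^m n^m)` for all `m`, then
`s n ≤ C 2^p exp(-(p/2)(bn)^{1/p})`. -/
theorem stmt_1 (C b p : ℝ) (hC : 0 < C) (hb : 0 < b) (hp : 1 ≤ p)
    (s : ℕ → ℝ) (hs : ∀ n : ℕ, 1 ≤ n → 0 < s n)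
    (h : ∀ m n : ℕ, 1 ≤ n →
      s n ≤ C * (Nat.factorial m : ℝ) ^ p / (b ^ m * (n : ℝ) ^ m)) :
    ∀ n : ℕ, 1 ≤ n →
      s n ≤ C * 2 ^ p * Real.exp (-(p / 2) * (b * n) ^ (1 / p)) := by
  intro n hn
  have hp0 : 0 < p := lt_of_lt_of_le one_pos hp
  have hn0 : (0:ℝ) < n := by exact_mod_cast hn
  have hx : (0:ℝ) < b * n := mul_pos hb hn0
  set x : ℝ := b * n with hxdef
  set y : ℝ := x ^ (1/p : ℝ) with hydef
  have hy0 : 0 ≤ y := Real.rpow_nonneg hx.le _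
  have hsn := hs n hn
  set t : ℝ := (C / s n) ^ (1/p : ℝ) with htdef
  have hCs : 0 < C / s n := div_pos hC hsn
  have ht0 : 0 ≤ t := Real.rpow_nonneg hCs.le _
  -- key term bound : y^m / m! ≤ t
  have key : ∀ m : ℕ, y ^ m / (Nat.factorial m : ℝ) ≤ t := by
    intro m
    have hm := h m n hn
    have hbn : (0:ℝ) < b ^ m * (n:ℝ) ^ m := by positivity
    have h1 : x ^ m ≤ (C / s n) * (Nat.factorial m : ℝ) ^ p := by
      rw [hxdef, mul_pow]
      rw [div_mul_eq_mul_div, le_div_iff₀ hsn]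
      have := (le_div_iff₀ hbn).mp hm
      linarith [this]
    have h2 : (x ^ m) ^ (1/p : ℝ) ≤ ((C / s n) * (Nat.factorial m : ℝ) ^ p) ^ (1/p : ℝ) :=
      Real.rpow_le_rpow (by positivity) h1 (by positivity)
    have hfac : (0:ℝ) < (Nat.factorial m : ℝ) := by exact_mod_cast m.factorial_pos
    have e1 : (x ^ m) ^ (1/p : ℝ) = y ^ m := by
      rw [hydef, ← Real.rpow_natCast x m, ← Real.rpow_mul hx.le,
        ← Real.rpow_natCast (x ^ (1/p:ℝ)) m, ← Real.rpow_mul hx.le]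
      ring_nf
    have e2 : ((C / s n) * (Nat.factorial m : ℝ) ^ p) ^ (1/p : ℝ)
        = t * (Nat.factorial m : ℝ) := by
      rw [Real.mul_rpow hCs.le (by positivity), htdef,
        ← Real.rpow_mul hfac.le, show p * (1/p) = 1 by field_simp, Real.rpow_one]
    rw [e1, e2] at h2
    rw [div_le_iff₀ hfac]
    exact h2
  -- exp(y/2) ≤ 2 t
  have hexp : Real.exp (y / 2) ≤ 2 * t := by
    have hser : Real.exp (y / 2) = ∑' m : ℕ, (y/2) ^ m / (Nat.factorial m : ℝ) := by
      rw [Real.exp_eq_exp_ℝ, NormedSpace.exp_eq_tsum_div]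
    rw [hser]
    have hsumm1 : Summable (fun m : ℕ => (y/2) ^ m / (Nat.factorial m : ℝ)) :=
      Real.summable_pow_div_factorial _
    have hsumm2 : Summable (fun m : ℕ => t * (1/2 : ℝ) ^ m) :=
      (summable_geometric_of_lt_one (by norm_num) (by norm_num)).mul_left t
    have hle : ∀ m : ℕ, (y/2) ^ m / (Nat.factorial m : ℝ) ≤ t * (1/2:ℝ) ^ m := by
      intro m
      have : (y/2) ^ m / (Nat.factorial m : ℝ)
          = (1/2:ℝ) ^ m * (y ^ m / (Nat.factorial m : ℝ)) := by
        rw [div_pow, one_div_pow, mul_comm (1 / (2:ℝ)^m), mul_one_div, div_div, div_div,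
          mul_comm ((2:ℝ)^m)]
      rw [this, mul_comm t]
      exact mul_le_mul_of_nonneg_left (key m) (by positivity)
    calc ∑' m : ℕ, (y/2) ^ m / (Nat.factorial m : ℝ)
        ≤ ∑' m : ℕ, t * (1/2:ℝ) ^ m := Summable.tsum_le_tsum hle hsumm1 hsumm2
      _ = t * (1 - 1/2)⁻¹ := by
          rw [tsum_mul_left, tsum_geometric_of_lt_one (by norm_num) (by norm_num)]
      _ = 2 * t := by ring
  -- raise to power p
  have hpow : Real.exp (y / 2) ^ p ≤ (2 * t) ^ p :=
    Real.rpow_le_rpow (Real.exp_pos _).le hexp hp0.le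
  have e3 : Real.exp (y / 2) ^ p = Real.exp (p / 2 * y) := by
    rw [← Real.exp_mul]; ring_nf
  have e4 : (2 * t) ^ p = 2 ^ p * (C / s n) := by
    rw [Real.mul_rpow (by norm_num) ht0, htdef, ← Real.rpow_mul hCs.le]
    rw [show (1/p) * p = 1 by field_simp]
    simp
  rw [e3, e4] at hpow
  have hfinal : s n * Real.exp (p / 2 * y) ≤ C * 2 ^ p := by
    rw [mul_comm (s n)]
    calc Real.exp (p/2*y) * s n ≤ (2 ^ p * (C / s n)) * s n :=
          mul_le_mul_of_nonneg_right hpow hsn.le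
      _ = C * 2 ^ p := by field_simp
  have hepos := Real.exp_pos (p / 2 * y)
  rw [show -(p/2) * x ^ (1/p:ℝ) = -(p/2*y) by ring, Real.exp_neg,
    ← div_eq_mul_inv, le_div_iff₀ hepos]
  linarith [hfinal]
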